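/- Let X and Y be Hilbert spaces, T : X → Y a bounded linear operator with a least-squares projection approximation {(X_n, T_n)}. For each n define Q_n : X → X by letting Q_n x be the unique u ∈ N(T)^⊥ with Tu = P_{T(X_n)} T x (i.e., Q_n = T† P_{T(X_n)} T). Then each Q_n is a bounded linear idempotent (Q_n² = Q_n) with N(Q_n) = (T*T(X_n))^⊥ and R(Q_n) = P_{N(T)^⊥}(X_n), and the projections converge strongly: s-lim_{n→∞} P_{N(Q_n)} = P_{N(T)} and s-lim_{n→∞} P_{R(Q_n)} = P_{N(T)^⊥}. -/

import Mathlib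

open Filter Topology Metric Submodule ContinuousLinearMap

/-- Orthogonal projection onto a subspace `K` (as an operator `H →L[ℝ] H`),
defined whenever `K` admits orthogonal projections (e.g. `K` closed). -/
noncomputable def orthProj {H : Type*} [NormedAddCommGroup H] [InnerProductSpace ℝ H]
    (K : Submodule ℝ H) : H →L[ℝ] H :=
  open scoped Classical in
  if h : HasOrthogonalProjection K then
    haveI := h
    K.subtypeL.comp (orthogonalProjection K)
  else 0

section Helpers
variable {H : Type*} [NormedAddCommGroup H] [InnerProductSpace ℝ H]

lemma orthProj_apply (K : Submodule ℝ H) [HasOrthogonalProjection K] (x : H) :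
    orthProj K x = (orthogonalProjection K x : H) := by
  unfold orthProj
  rw [dif_pos ‹HasOrthogonalProjection K›]
  rfl

lemma orthProj_mem (K : Submodule ℝ H) [HasOrthogonalProjection K] (x : H) :
    orthProj K x ∈ K := by
  rw [orthProj_apply]; exact (orthogonalProjection K x).2

lemma sub_orthProj_mem (K : Submodule ℝ H) [HasOrthogonalProjection K] (x : H) :
    x - orthProj K x ∈ Kᗮ := by
  rw [orthProj_apply]; exact sub_starProjection_mem_orthogonal x

lemma orthProj_eq_self (K : Submodule ℝ H) [HasOrthogonalProjection K] {x : H} (hx : x ∈ K) :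
    orthProj K x = x := by
  rw [orthProj_apply]; exact starProjection_eq_self_iff.mpr hx

lemma orthProj_eq_zero_iff (K : Submodule ℝ H) [HasOrthogonalProjection K] {x : H} :
    orthProj K x = 0 ↔ x ∈ Kᗮ := by
  rw [orthProj_apply]
  rw [show (0 : H) = ((0 : K) : H) by simp, Subtype.coe_inj]
  exact orthogonalProjection_eq_zero_iff

lemma norm_orthProj_le (K : Submodule ℝ H) [HasOrthogonalProjection K] (x : H) :
    ‖orthProj K x‖ ≤ ‖x‖ := by
  rw [orthProj_apply]
  calc ‖(orthogonalProjection K x : H)‖ = ‖orthogonalProjection K x‖ := rfl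
    _ ≤ ‖(orthogonalProjection K : H →L[ℝ] K)‖ * ‖x‖ := (orthogonalProjection K).le_opNorm x
    _ ≤ 1 * ‖x‖ := by gcongr; exact orthogonalProjection_norm_le K
    _ = ‖x‖ := one_mul ‖x‖

lemma orthProj_orthogonal (K : Submodule ℝ H) [HasOrthogonalProjection K] (x : H) :
    orthProj Kᗮ x = x - orthProj K x := by
  rw [orthProj_apply, orthProj_apply]; exact starProjection_orthogonal_val x

end Helpers

lemma ker_orth_unique {X Y : Type*} [NormedAddCommGroup X] [InnerProductSpace ℝ X]
    [NormedAddCommGroup Y] [InnerProductSpace ℝ Y]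
    (T : X →L[ℝ] Y) {u v : X} (hu : u ∈ (LinearMap.ker (T : X →ₗ[ℝ] Y))ᗮ)
    (hv : v ∈ (LinearMap.ker (T : X →ₗ[ℝ] Y))ᗮ) (h : T u = T v) : u = v := by
  have hm : u - v ∈ LinearMap.ker (T : X →ₗ[ℝ] Y) := by
    simp [LinearMap.mem_ker, map_sub, h]
  have h2 : u - v ∈ (LinearMap.ker (T : X →ₗ[ℝ] Y))ᗮ := sub_mem hu hv
  have h3 : (inner ℝ (u - v) (u - v) : ℝ) = 0 := ((Submodule.mem_orthogonal _ _).mp h2) _ hm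
  rwa [inner_self_eq_zero, sub_eq_zero] at h3

lemma tendsto_orthProj_of_le {H : Type*} [NormedAddCommGroup H] [InnerProductSpace ℝ H]
    (K : Submodule ℝ H) [HasOrthogonalProjection K] (Kn : ℕ → Submodule ℝ H)
    [inst : ∀ n, HasOrthogonalProjection (Kn n)]
    (hle : ∀ n, Kn n ≤ K)
    (happ : ∀ y ∈ K, ∀ ε > 0, ∀ᶠ n in atTop, ∃ v ∈ Kn n, ‖y - v‖ < ε)
    (x : H) : Tendsto (fun n => orthProj (Kn n) x) atTop (𝓝 (orthProj K x)) := by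
  rw [Metric.tendsto_nhds]
  intro ε hε
  set p := orthProj K x with hp
  set d := ‖x - p‖ with hd
  have hd0 : 0 ≤ d := norm_nonneg _
  set δ := min 1 (ε ^ 2 / (2 * (2 * d + 1))) with hδdef
  have hδpos : 0 < δ := lt_min one_pos (by positivity)
  have hδ1 : δ ≤ 1 := min_le_left _ _
  have hδ2 : δ ≤ ε ^ 2 / (2 * (2 * d + 1)) := min_le_right _ _
  filter_upwards [happ p (orthProj_mem K x) δ hδpos] with n hn
  obtain ⟨v, hvK, hv⟩ := hn
  set q := orthProj (Kn n) x with hq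
  have hqK : q ∈ K := hle n (orthProj_mem _ x)
  have hinner : (inner ℝ (x - p) (p - q) : ℝ) = 0 := by
    have h1 : x - p ∈ Kᗮ := sub_orthProj_mem K x
    have h2 : p - q ∈ K := sub_mem (orthProj_mem K x) hqK
    rw [real_inner_comm]
    exact ((Submodule.mem_orthogonal _ _).mp h1) _ h2
  have hpyth : ‖x - q‖ ^ 2 = d ^ 2 + ‖p - q‖ ^ 2 := by
    have hxq : x - q = (x - p) + (p - q) := by abel
    rw [hxq, norm_add_sq_real, hinner]
    ring
  have hmin : ‖x - q‖ ≤ ‖x - v‖ := by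
    rw [hq, orthProj_apply (Kn n) x]; show ‖x - (Kn n).starProjection x‖ ≤ _; rw [starProjection_minimal]
    exact ciInf_le ⟨0, by rintro b ⟨w, rfl⟩; positivity⟩ (⟨v, hvK⟩ : Kn n)
  have hxv : ‖x - v‖ ≤ d + δ := by
    calc ‖x - v‖ = ‖(x - p) + (p - v)‖ := by rw [show x - v = (x - p) + (p - v) by abel]
      _ ≤ ‖x - p‖ + ‖p - v‖ := norm_add_le _ _
      _ ≤ d + δ := by rw [← hd]; exact add_le_add le_rfl hv.le
  rw [dist_eq_norm]
  have hxq2 : ‖x - q‖ ^ 2 ≤ (d + δ) ^ 2 := by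
    have := hmin.trans hxv
    nlinarith [norm_nonneg (x - q)]
  have hδ3 : δ * (2 * (2 * d + 1)) ≤ ε ^ 2 := by
    exact (le_div_iff₀ (by positivity)).mp hδ2
  have hsq : ‖q - p‖ ^ 2 < ε ^ 2 := by
    rw [norm_sub_rev]
    nlinarith [sq_nonneg δ, mul_pos hε hε]
  exact lt_of_pow_lt_pow_left₀ 2 hε.le hsq


variable {X Y : Type*} [NormedAddCommGroup X] [InnerProductSpace ℝ X] [CompleteSpace X]
  [NormedAddCommGroup Y] [InnerProductSpace ℝ Y] [CompleteSpace Y]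

set_option maxHeartbeats 2000000 in
/-- The oblique projections `Qₙ = T†P_{T(Xₙ)}T`: bounded linear idempotents with
`N(Qₙ) = (T*T(Xₙ))ᗮ`, `R(Qₙ) = P_{N(T)ᗮ}(Xₙ)`, and
`s-lim P_{N(Qₙ)} = P_{N(T)}`, `s-lim P_{R(Qₙ)} = P_{N(T)ᗮ}`. -/
theorem stmt15
    (T : X →L[ℝ] Y) (Xn : ℕ → Submodule ℝ X)
    (hfin : ∀ n, FiniteDimensional ℝ (Xn n))
    (hinf : ¬ FiniteDimensional ℝ X)
    (hproj : ∀ x : X, Tendsto (fun n => orthProj (Xn n) x) atTop (𝓝 x))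
    (Tn : ℕ → X →L[ℝ] Y) (hTn : ∀ n, Tn n = T.comp (orthProj (Xn n)))
    (Qn : ℕ → X → X)
    (hQn : ∀ n (x : X), Qn n x ∈ (LinearMap.ker (T : X →ₗ[ℝ] Y))ᗮ ∧
      T (Qn n x) = orthProj ((Xn n).map (T : X →ₗ[ℝ] Y)) (T x)) :
    (∀ n, ∃ Q : X →L[ℝ] X, (⇑Q = Qn n) ∧ Q.comp Q = Q) ∧
    (∀ n (x : X), Qn n x = 0 ↔
      x ∈ (((Xn n).map (((ContinuousLinearMap.adjoint T).comp T : X →L[ℝ] X) : X →ₗ[ℝ] X))ᗮ : Submodule ℝ X)) ∧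
    (∀ n, Set.range (Qn n)
      = (((Xn n).map (orthProj ((LinearMap.ker (T : X →ₗ[ℝ] Y))ᗮ) : X →ₗ[ℝ] X) : Submodule ℝ X) : Set X)) ∧
    (∀ x : X, Tendsto
      (fun n => orthProj (((Xn n).map (((ContinuousLinearMap.adjoint T).comp T : X →L[ℝ] X) : X →ₗ[ℝ] X))ᗮ) x) atTop
      (𝓝 (orthProj (LinearMap.ker (T : X →ₗ[ℝ] Y)) x))) ∧
    (∀ x : X, Tendsto
      (fun n => orthProj ((Xn n).map (orthProj ((LinearMap.ker (T : X →ₗ[ℝ] Y))ᗮ) : X →ₗ[ℝ] X)) x) atTop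
      (𝓝 (orthProj ((LinearMap.ker (T : X →ₗ[ℝ] Y))ᗮ) x))) := by
  haveI hXfd : ∀ n, FiniteDimensional ℝ (Xn n) := hfin
  haveI hkerC : CompleteSpace (LinearMap.ker (T : X →ₗ[ℝ] Y)) :=
    (ContinuousLinearMap.isClosed_ker T).completeSpace_coe
  haveI hMfd : ∀ n, FiniteDimensional ℝ ((Xn n).map (T : X →ₗ[ℝ] Y)) := fun n =>
    Module.Finite.map _ _
  haveI hSfd : ∀ n, FiniteDimensional ℝ ((Xn n).map (orthProj ((LinearMap.ker (T : X →ₗ[ℝ] Y))ᗮ) : X →ₗ[ℝ] X)) := fun n =>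
    Module.Finite.map _ _
  haveI hKfd : ∀ n, FiniteDimensional ℝ ((Xn n).map (((ContinuousLinearMap.adjoint T).comp T : X →L[ℝ] X) : X →ₗ[ℝ] X)) :=
    fun n => Module.Finite.map _ _
  -- `T` kills the difference with the projection onto `(ker T)ᗮ`
  have hTproj : ∀ w : X, T (orthProj ((LinearMap.ker (T : X →ₗ[ℝ] Y))ᗮ) w) = T w := by
    intro w
    have h : w - orthProj ((LinearMap.ker (T : X →ₗ[ℝ] Y))ᗮ) w ∈ ((LinearMap.ker (T : X →ₗ[ℝ] Y))ᗮ)ᗮ :=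
      sub_orthProj_mem _ w
    rw [Submodule.orthogonal_orthogonal] at h
    have h0 : T (w - orthProj ((LinearMap.ker (T : X →ₗ[ℝ] Y))ᗮ) w) = 0 := LinearMap.mem_ker.mp h
    rw [map_sub, sub_eq_zero] at h0
    exact h0.symm
  have hSle : ∀ n, (Xn n).map (orthProj ((LinearMap.ker (T : X →ₗ[ℝ] Y))ᗮ) : X →ₗ[ℝ] X) ≤ (LinearMap.ker (T : X →ₗ[ℝ] Y))ᗮ := by
    intro n s hs
    obtain ⟨w, hw, rfl⟩ := Submodule.mem_map.mp hs
    exact orthProj_mem _ w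
  have hKnle : ∀ n, (Xn n).map (((ContinuousLinearMap.adjoint T).comp T : X →L[ℝ] X) : X →ₗ[ℝ] X) ≤ (LinearMap.ker (T : X →ₗ[ℝ] Y))ᗮ := by
    intro n u hu
    obtain ⟨w, hw, rfl⟩ := Submodule.mem_map.mp hu
    rw [Submodule.mem_orthogonal]
    intro z hz
    rw [ContinuousLinearMap.coe_coe, ContinuousLinearMap.comp_apply, adjoint_inner_right]
    rw [show T z = 0 from LinearMap.mem_ker.mp hz]
    simp
  -- Part 1
  have hpart1 : ∀ n, ∃ Q : X →L[ℝ] X, (⇑Q = Qn n) ∧ Q.comp Q = Q := by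
    intro n
    let S : Submodule ℝ X := (Xn n).map (orthProj ((LinearMap.ker (T : X →ₗ[ℝ] Y))ᗮ) : X →ₗ[ℝ] X)
    let M : Submodule ℝ Y := (Xn n).map (T : X →ₗ[ℝ] Y)
    haveI : FiniteDimensional ℝ S := hSfd n
    haveI : FiniteDimensional ℝ M := hMfd n
    have hmem : ∀ s : S, T s ∈ M := by
      rintro ⟨s, hs⟩
      obtain ⟨w, hw, rfl⟩ := Submodule.mem_map.mp hs
      show T (orthProj ((LinearMap.ker (T : X →ₗ[ℝ] Y))ᗮ) w) ∈ M
      rw [hTproj w]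
      exact Submodule.mem_map_of_mem hw
    let φ : S →ₗ[ℝ] M :=
      LinearMap.codRestrict M ((T : X →ₗ[ℝ] Y).comp S.subtype) (fun s => hmem s)
    have hφcoe : ∀ s : S, (φ s : Y) = T s := fun s => rfl
    have hφbij : Function.Bijective φ := by
      constructor
      · intro s t hst
        have h : T (s : X) = T t := by rw [← hφcoe s, ← hφcoe t, hst]
        exact Subtype.ext (ker_orth_unique T (hSle n s.2) (hSle n t.2) h)
      · rintro ⟨y, hy⟩
        obtain ⟨w, hw, rfl⟩ := Submodule.mem_map.mp hy
        exact ⟨⟨orthProj ((LinearMap.ker (T : X →ₗ[ℝ] Y))ᗮ) w, Submodule.mem_map_of_mem hw⟩,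
          Subtype.ext (hTproj w)⟩
    let e : S ≃ₗ[ℝ] M := LinearEquiv.ofBijective φ hφbij
    let e' : S ≃L[ℝ] M := e.toContinuousLinearEquiv
    let Q : X →L[ℝ] X := S.subtypeL.comp (e'.symm.toContinuousLinearMap.comp
      ((orthogonalProjection M).comp T))
    have hinv : ∀ z : M, φ (e'.symm z) = z := fun z => e'.apply_symm_apply z
    have hQmem : ∀ x : X, Q x ∈ S := fun x => Submodule.coe_mem _
    have hkey : ∀ x : X, T (Q x) = orthProj M (T x) := by
      intro x
      have h1 : (φ (e'.symm (orthogonalProjection M (T x))) : Y)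
          = ((orthogonalProjection M (T x) : M) : Y) := by rw [hinv]
      rw [orthProj_apply]
      exact h1
    have hQeq : ⇑Q = Qn n := by
      funext x
      exact ker_orth_unique T (hSle n (hQmem x)) (hQn n x).1 (by rw [hkey, (hQn n x).2])
    refine ⟨Q, hQeq, ?_⟩
    ext x
    show Q (Q x) = Q x
    rw [hQeq]
    apply ker_orth_unique T (hQn n _).1 (hQn n _).1
    rw [(hQn n (Qn n x)).2]
    apply orthProj_eq_self
    rw [(hQn n x).2]
    exact orthProj_mem _ _
  -- Part 2
  have hpart2 : ∀ n (x : X), Qn n x = 0 ↔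
      x ∈ (((Xn n).map (((ContinuousLinearMap.adjoint T).comp T : X →L[ℝ] X) : X →ₗ[ℝ] X))ᗮ : Submodule ℝ X) := by
    intro n x
    have hTx : (T (Qn n x) = 0) ↔ T x ∈ ((Xn n).map (T : X →ₗ[ℝ] Y))ᗮ := by
      rw [(hQn n x).2, orthProj_eq_zero_iff]
    constructor
    · intro h
      rw [Submodule.mem_orthogonal]
      intro u hu
      obtain ⟨w, hw, rfl⟩ := Submodule.mem_map.mp hu
      rw [ContinuousLinearMap.coe_coe, ContinuousLinearMap.comp_apply, adjoint_inner_left]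
      have h2 : T x ∈ ((Xn n).map (T : X →ₗ[ℝ] Y))ᗮ := hTx.mp (by rw [h, map_zero])
      exact ((Submodule.mem_orthogonal _ _).mp h2) _ (Submodule.mem_map_of_mem hw)
    · intro h
      have h2 : T x ∈ ((Xn n).map (T : X →ₗ[ℝ] Y))ᗮ := by
        rw [Submodule.mem_orthogonal]
        rintro u hu
        obtain ⟨w, hw, rfl⟩ := Submodule.mem_map.mp hu
        have h3 := ((Submodule.mem_orthogonal _ _).mp h)
          (((ContinuousLinearMap.adjoint T).comp T) w) (Submodule.mem_map_of_mem hw)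
        rwa [ContinuousLinearMap.comp_apply, adjoint_inner_left] at h3
      exact ker_orth_unique T (hQn n x).1 (zero_mem _) (by rw [hTx.mpr h2, map_zero])
  -- Part 3
  have hpart3 : ∀ n, Set.range (Qn n)
      = (((Xn n).map (orthProj ((LinearMap.ker (T : X →ₗ[ℝ] Y))ᗮ) : X →ₗ[ℝ] X) : Submodule ℝ X) : Set X) := by
    intro n
    ext s
    constructor
    · rintro ⟨x, rfl⟩
      have hmemM : orthProj ((Xn n).map (T : X →ₗ[ℝ] Y)) (T x) ∈ (Xn n).map (T : X →ₗ[ℝ] Y) := orthProj_mem _ _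
      obtain ⟨w, hw, hTw⟩ := Submodule.mem_map.mp hmemM
      have heq : Qn n x = orthProj ((LinearMap.ker (T : X →ₗ[ℝ] Y))ᗮ) w := by
        apply ker_orth_unique T (hQn n x).1 (orthProj_mem _ w)
        rw [(hQn n x).2, hTproj w]; exact hTw.symm
      rw [SetLike.mem_coe, heq]
      exact Submodule.mem_map_of_mem hw
    · intro hs
      obtain ⟨w, hw, rfl⟩ := Submodule.mem_map.mp (SetLike.mem_coe.mp hs)
      refine ⟨orthProj ((LinearMap.ker (T : X →ₗ[ℝ] Y))ᗮ) w, ?_⟩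
      apply ker_orth_unique T (hQn n _).1 (orthProj_mem _ w)
      rw [(hQn n _).2, hTproj w]
      exact orthProj_eq_self _ (Submodule.mem_map_of_mem hw)
  -- density of the range of T*T in (ker T)ᗮ
  have hdense : ∀ y ∈ (LinearMap.ker (T : X →ₗ[ℝ] Y))ᗮ, ∀ ε > 0,
      ∃ w : X, ‖y - (ContinuousLinearMap.adjoint T) (T w)‖ < ε := by
    intro y hy ε hε
    set R := LinearMap.range (((ContinuousLinearMap.adjoint T).comp T : X →L[ℝ] X) : X →ₗ[ℝ] X) with hRdef
    haveI : CompleteSpace R.topologicalClosure :=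
      (Submodule.isClosed_topologicalClosure R).completeSpace_coe
    have h1 : (R.topologicalClosure)ᗮ ≤ LinearMap.ker (T : X →ₗ[ℝ] Y) := by
      intro z hz
      have h2 : z ∈ Rᗮ := (Submodule.orthogonal_le R.le_topologicalClosure) hz
      have h3 : (inner ℝ ((ContinuousLinearMap.adjoint T) (T z)) z : ℝ) = 0 :=
        ((Submodule.mem_orthogonal _ _).mp h2) _
          (LinearMap.mem_range.mpr ⟨z, rfl⟩)
      rw [adjoint_inner_left] at h3
      exact LinearMap.mem_ker.mpr (inner_self_eq_zero.mp h3)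
    have hR : (LinearMap.ker (T : X →ₗ[ℝ] Y))ᗮ ≤ R.topologicalClosure := by
      calc (LinearMap.ker (T : X →ₗ[ℝ] Y))ᗮ ≤ ((R.topologicalClosure)ᗮ)ᗮ := Submodule.orthogonal_le h1
        _ = R.topologicalClosure := Submodule.orthogonal_orthogonal _
    have hy2 : y ∈ closure (R : Set X) := by
      rw [← Submodule.topologicalClosure_coe]
      exact hR hy
    obtain ⟨b, hbR, hby⟩ := Metric.mem_closure_iff.mp hy2 ε hε
    obtain ⟨w, rfl⟩ := LinearMap.mem_range.mp hbR
    exact ⟨w, by rwa [← dist_eq_norm]⟩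
  -- Part 4
  have happ4 : ∀ y ∈ (LinearMap.ker (T : X →ₗ[ℝ] Y))ᗮ, ∀ ε > 0, ∀ᶠ n in atTop,
      ∃ v ∈ (Xn n).map (((ContinuousLinearMap.adjoint T).comp T : X →L[ℝ] X) : X →ₗ[ℝ] X), ‖y - v‖ < ε := by
    intro y hy ε hε
    set A : X →L[ℝ] X := (ContinuousLinearMap.adjoint T).comp T with hA
    obtain ⟨w, hw⟩ := hdense y hy (ε / 2) (by positivity)
    have hw' : ‖y - A w‖ < ε / 2 := hw
    have hcont : Tendsto (fun n => A (orthProj (Xn n) w)) atTop (𝓝 (A w)) :=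
      (A.continuous.tendsto _).comp (hproj w)
    filter_upwards [Metric.tendsto_nhds.mp hcont (ε / 2) (by positivity)] with n hn
    refine ⟨A (orthProj (Xn n) w), Submodule.mem_map_of_mem (orthProj_mem _ _), ?_⟩
    rw [dist_eq_norm] at hn
    calc ‖y - A (orthProj (Xn n) w)‖
        = ‖(y - A w) + (A w - A (orthProj (Xn n) w))‖ := by rw [sub_add_sub_cancel]
      _ ≤ ‖y - A w‖ + ‖A w - A (orthProj (Xn n) w)‖ := norm_add_le _ _
      _ < ε / 2 + ε / 2 := add_lt_add hw' (by rwa [norm_sub_rev])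
      _ = ε := by ring
  have hpart4 : ∀ x : X, Tendsto
      (fun n => orthProj (((Xn n).map (((ContinuousLinearMap.adjoint T).comp T : X →L[ℝ] X) : X →ₗ[ℝ] X))ᗮ) x) atTop
      (𝓝 (orthProj (LinearMap.ker (T : X →ₗ[ℝ] Y)) x)) := by
    intro x
    have hmain := tendsto_orthProj_of_le ((LinearMap.ker (T : X →ₗ[ℝ] Y))ᗮ)
      (fun n => (Xn n).map (((ContinuousLinearMap.adjoint T).comp T : X →L[ℝ] X) : X →ₗ[ℝ] X)) hKnle happ4 x
    have heq : (fun n => orthProj (((Xn n).map (((ContinuousLinearMap.adjoint T).comp T : X →L[ℝ] X) : X →ₗ[ℝ] X))ᗮ) x)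
        = fun n => x - orthProj ((Xn n).map (((ContinuousLinearMap.adjoint T).comp T : X →L[ℝ] X) : X →ₗ[ℝ] X)) x := by
      funext n
      exact orthProj_orthogonal ((Xn n).map (((ContinuousLinearMap.adjoint T).comp T : X →L[ℝ] X) : X →ₗ[ℝ] X)) x
    have heq2 : orthProj (LinearMap.ker (T : X →ₗ[ℝ] Y)) x = x - orthProj ((LinearMap.ker (T : X →ₗ[ℝ] Y))ᗮ) x := by
      conv_lhs => rw [← Submodule.orthogonal_orthogonal (LinearMap.ker (T : X →ₗ[ℝ] Y))]
      exact orthProj_orthogonal ((LinearMap.ker (T : X →ₗ[ℝ] Y))ᗮ) x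
    rw [heq, heq2]
    exact tendsto_const_nhds.sub hmain
  -- Part 5
  have happ5 : ∀ y ∈ (LinearMap.ker (T : X →ₗ[ℝ] Y))ᗮ, ∀ ε > 0, ∀ᶠ n in atTop,
      ∃ v ∈ (Xn n).map (orthProj ((LinearMap.ker (T : X →ₗ[ℝ] Y))ᗮ) : X →ₗ[ℝ] X), ‖y - v‖ < ε := by
    intro y hy ε hε
    filter_upwards [Metric.tendsto_nhds.mp (hproj y) ε hε] with n hn
    refine ⟨orthProj ((LinearMap.ker (T : X →ₗ[ℝ] Y))ᗮ) (orthProj (Xn n) y),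
      Submodule.mem_map_of_mem (orthProj_mem _ _), ?_⟩
    have heq : y - orthProj ((LinearMap.ker (T : X →ₗ[ℝ] Y))ᗮ) (orthProj (Xn n) y)
        = orthProj ((LinearMap.ker (T : X →ₗ[ℝ] Y))ᗮ) (y - orthProj (Xn n) y) := by
      rw [map_sub, orthProj_eq_self _ hy]
    rw [heq]
    calc ‖orthProj ((LinearMap.ker (T : X →ₗ[ℝ] Y))ᗮ) (y - orthProj (Xn n) y)‖
        ≤ ‖y - orthProj (Xn n) y‖ := norm_orthProj_le _ _
      _ < ε := by rwa [← neg_sub, norm_neg, ← dist_eq_norm]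
  have hpart5 : ∀ x : X, Tendsto
      (fun n => orthProj ((Xn n).map (orthProj ((LinearMap.ker (T : X →ₗ[ℝ] Y))ᗮ) : X →ₗ[ℝ] X)) x) atTop
      (𝓝 (orthProj ((LinearMap.ker (T : X →ₗ[ℝ] Y))ᗮ) x)) := fun x =>
    tendsto_orthProj_of_le ((LinearMap.ker (T : X →ₗ[ℝ] Y))ᗮ)
      (fun n => (Xn n).map (orthProj ((LinearMap.ker (T : X →ₗ[ℝ] Y))ᗮ) : X →ₗ[ℝ] X)) hSle happ5 x
  exact ⟨hpart1, hpart2, hpart3, hpart4, hpart5⟩
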